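/- Fix positive reals d1, d2, d3, d4 and angles α1, α2, α3, α4 ∈ (0, π) satisfying the rhomboid condition: either (α1 = α3 and α2 = α4) or (α1 + α3 = π and α2 + α4 = π), together with cos²α1 ≠ cos²α2. Consider the set of tuples (v, w1, w2, w3, w4) of points of ℝ³ with dist(v, w_i) = d_i and ∠ w_i v w_{i+1} = α_i for all i (indices mod 4). Then the subset of flat tuples — those in which all five points are coplanar — is nonempty and is partitioned by congruence (simultaneous application of one isometry of ℝ³ to all five points) into exactly two classes. -/

import Mathlib

open EuclideanGeometry

noncomputable section

/-- Points of Euclidean 3-space. -/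
abbrev Pt : Type := EuclideanSpace ℝ (Fin 3)

/-- A pyramid tuple: an apex together with four base points (indices mod 4). -/
abbrev PyrTuple : Type := Pt × (ZMod 4 → Pt)

/-- The set of pyramid tuples with apex-to-base distances `d i` and apex angles `α i`. -/
def pyrSet (d α : ZMod 4 → ℝ) : Set PyrTuple :=
  {t | ∀ i : ZMod 4, dist t.1 (t.2 i) = d i ∧ ∠ (t.2 i) t.1 (t.2 (i + 1)) = α i}

/-- A pyramid tuple is flat if its five points are coplanar. -/
def IsFlat (t : PyrTuple) : Prop :=
  Coplanar ℝ ({t.1, t.2 0, t.2 1, t.2 2, t.2 3} : Set Pt)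

/-- Two pyramid tuples are congruent if a single isometry of `ℝ³` maps the first
onto the second componentwise. -/
def PyrCongruent (t₁ t₂ : PyrTuple) : Prop :=
  ∃ σ : Pt ≃ᵢ Pt, σ t₁.1 = t₂.1 ∧ ∀ i, σ (t₁.2 i) = t₂.2 i

open RealInnerProductSpace

def pt2 (x y : ℝ) : Pt := (WithLp.equiv 2 (Fin 3 → ℝ)).symm ![x, y, 0]
lemma inner_pt2 (x y x' y' : ℝ) : ⟪pt2 x y, pt2 x' y'⟫ = x * x' + y * y' := by
  simp [pt2, PiLp.inner_apply, Fin.sum_univ_three]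
  ring
lemma pt2_sub (x y x' y' : ℝ) : pt2 x y - pt2 x' y' = pt2 (x - x') (y - y') := by
  ext j; fin_cases j <;> simp [pt2]
lemma norm_pt2 (x y : ℝ) : ‖pt2 x y‖ ^ 2 = x ^ 2 + y ^ 2 := by
  have h := real_inner_self_eq_norm_sq (pt2 x y)
  rw [inner_pt2] at h; nlinarith

/-- The planar model tuple with apex at the origin and polar angles `ψ`. -/
def model (d ψ : ZMod 4 → ℝ) : PyrTuple :=
  (0, fun i => pt2 (d i * Real.cos (ψ i)) (d i * Real.sin (ψ i)))

lemma mem_pyrSet_iff (d α : ZMod 4 → ℝ) (hd : ∀ i, 0 < d i)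
    (hα : ∀ i, α i ∈ Set.Ioo 0 Real.pi) (t : PyrTuple) :
    t ∈ pyrSet d α ↔ ∀ i, ‖t.2 i - t.1‖ = d i ∧
      ⟪t.2 i - t.1, t.2 (i + 1) - t.1⟫ = d i * d (i + 1) * Real.cos (α i) := by
  have hang : ∀ i, ∠ (t.2 i) t.1 (t.2 (i + 1)) =
      InnerProductGeometry.angle (t.2 i - t.1) (t.2 (i + 1) - t.1) := by
    intro i
    rw [EuclideanGeometry.angle, vsub_eq_sub, vsub_eq_sub]
  constructor
  · intro h i
    obtain ⟨h1, h2⟩ := h i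
    have hn1 : ‖t.2 i - t.1‖ = d i := by
      rw [← dist_eq_norm, dist_comm]; exact h1
    refine ⟨hn1, ?_⟩
    have hn2 : ‖t.2 (i + 1) - t.1‖ = d (i + 1) := by
      rw [← dist_eq_norm, dist_comm]; exact (h (i + 1)).1
    have hc := InnerProductGeometry.cos_angle (t.2 i - t.1) (t.2 (i + 1) - t.1)
    rw [← hang i, h2, hn1, hn2] at hc
    have hdi := (hd i).ne'
    have hdj := (hd (i + 1)).ne'
    rw [eq_div_iff (by positivity : d i * d (i + 1) ≠ 0)] at hc
    linarith [hc]
  · intro h i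
    obtain ⟨h1, h2⟩ := h i
    constructor
    · rw [dist_eq_norm']; exact h1
    · rw [hang i]
      unfold InnerProductGeometry.angle
      rw [h1, (h (i + 1)).1, h2]
      rw [show d i * d (i + 1) * Real.cos (α i) / (d i * d (i + 1)) = Real.cos (α i) by
        have := (hd i).ne'
        have := (hd (i + 1)).ne'
        field_simp]
      exact Real.arccos_cos (hα i).1.le (hα i).2.le

lemma model_mem (d α : ZMod 4 → ℝ) (hd : ∀ i, 0 < d i)
    (hα : ∀ i, α i ∈ Set.Ioo 0 Real.pi) (ψ : ZMod 4 → ℝ)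
    (h : ∀ i, Real.cos (ψ i - ψ (i + 1)) = Real.cos (α i)) :
    model d ψ ∈ pyrSet d α := by
  rw [mem_pyrSet_iff d α hd hα]
  intro i
  have hsub : ∀ j : ZMod 4, (model d ψ).2 j - (model d ψ).1 =
      pt2 (d j * Real.cos (ψ j)) (d j * Real.sin (ψ j)) := by
    intro j; simp [model]
  rw [hsub i, hsub (i + 1)]
  constructor
  · have h2 : ‖pt2 (d i * Real.cos (ψ i)) (d i * Real.sin (ψ i))‖ ^ 2 = (d i) ^ 2 := by
      rw [norm_pt2]
      have := Real.sin_sq_add_cos_sq (ψ i)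
      nlinarith
    have := norm_nonneg (pt2 (d i * Real.cos (ψ i)) (d i * Real.sin (ψ i)))
    nlinarith [(hd i).le]
  · rw [inner_pt2, ← h i, Real.cos_sub]
    ring

lemma model_flat (d ψ : ZMod 4 → ℝ) : IsFlat (model d ψ) := by
  unfold IsFlat Coplanar
  have hsub : vectorSpan ℝ ({(model d ψ).1, (model d ψ).2 0, (model d ψ).2 1,
      (model d ψ).2 2, (model d ψ).2 3} : Set Pt) ≤
      Submodule.span ℝ ({pt2 1 0, pt2 0 1} : Set Pt) := by
    rw [vectorSpan_def, Submodule.span_le]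
    rintro x ⟨p, hp, q, hq, rfl⟩
    have key : ∀ r ∈ ({(model d ψ).1, (model d ψ).2 0, (model d ψ).2 1,
        (model d ψ).2 2, (model d ψ).2 3} : Set Pt), ∃ a b, r = pt2 a b := by
      rintro r (rfl | rfl | rfl | rfl | rfl)
      · exact ⟨0, 0, by ext j; fin_cases j <;> simp [pt2, model]⟩
      all_goals exact ⟨_, _, rfl⟩
    obtain ⟨a, b, rfl⟩ := key p hp
    obtain ⟨a', b', rfl⟩ := key q hq
    simp only [vsub_eq_sub]
    rw [pt2_sub]
    have : pt2 (a - a') (b - b') = (a - a') • pt2 1 0 + (b - b') • pt2 0 1 := by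
      ext j; fin_cases j <;> simp [pt2]
    rw [this]
    exact Submodule.add_mem _
      (Submodule.smul_mem _ _ (Submodule.subset_span (by simp)))
      (Submodule.smul_mem _ _ (Submodule.subset_span (by simp)))
  refine le_trans (Submodule.rank_mono hsub) ?_
  refine le_trans (rank_span_le _) ?_
  refine le_trans (Cardinal.mk_insert_le) ?_
  rw [Cardinal.mk_singleton]
  norm_num

/-- rotation (or reflection) in the first two coordinates -/
def rotrefl (co si s : ℝ) : Pt →ₗ[ℝ] Pt where
  toFun p := (WithLp.equiv 2 (Fin 3 → ℝ)).symm
    ![co * p 0 - s * si * p 1, si * p 0 + s * co * p 1, p 2]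
  map_add' p q := by
    ext j; fin_cases j <;>
      simp [PiLp.toLp_apply, PiLp.add_apply] <;> ring
  map_smul' r p := by
    ext j; fin_cases j <;>
      simp [PiLp.toLp_apply, PiLp.smul_apply, smul_eq_mul] <;> ring

def rotIso (co si s : ℝ) (hco : co ^ 2 + si ^ 2 = 1) (hs : s ^ 2 = 1) : Pt ≃ₗᵢ[ℝ] Pt :=
  ((rotrefl co si s).isometryOfInner (by
    intro p q
    simp only [rotrefl, LinearMap.coe_mk, AddHom.coe_mk, PiLp.inner_apply,
      RCLike.inner_apply, conj_trivial, Fin.sum_univ_three, WithLp.equiv_symm_apply, PiLp.toLp_apply]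
    simp only [Matrix.cons_val_zero, Matrix.cons_val_one, Matrix.head_cons,
      Matrix.cons_val_two, Matrix.tail_cons]
    linear_combination (p 0 * q 0 + p 1 * q 1 * s ^ 2) * hco + p 1 * q 1 * hs)).toLinearIsometryEquiv rfl

lemma rotIso_pt2 (co si s : ℝ) (hco : co ^ 2 + si ^ 2 = 1) (hs : s ^ 2 = 1) (x y : ℝ) :
    rotIso co si s hco hs (pt2 x y) = pt2 (co * x - s * si * y) (si * x + s * co * y) := by
  ext j; fin_cases j <;> rfl

lemma pyrCongruent_symm {t₁ t₂ : PyrTuple} (h : PyrCongruent t₁ t₂) : PyrCongruent t₂ t₁ := by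
  obtain ⟨σ, h1, h2⟩ := h
  exact ⟨σ.symm, by rw [← h1, σ.symm_apply_apply],
    fun i => by rw [← h2 i, σ.symm_apply_apply]⟩

lemma pyrCongruent_trans {t₁ t₂ t₃ : PyrTuple} (h : PyrCongruent t₁ t₂)
    (h' : PyrCongruent t₂ t₃) : PyrCongruent t₁ t₃ := by
  obtain ⟨σ, h1, h2⟩ := h
  obtain ⟨τ, h1', h2'⟩ := h'
  exact ⟨σ.trans τ, by simp [h1, h1'], fun i => by simp [h2 i, h2' i]⟩

lemma rot_congr (d ψ θ : ZMod 4 → ℝ) (s c : ℝ) (hs : s = 1 ∨ s = -1)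
    (h : ∀ i, ∃ k : ℤ, ψ i = s * θ i + c + k * (2 * Real.pi)) :
    PyrCongruent (model d θ) (model d ψ) := by
  have hs2 : s ^ 2 = 1 := by rcases hs with h | h <;> rw [h] <;> norm_num
  have hco : Real.cos c ^ 2 + Real.sin c ^ 2 = 1 := by
    have := Real.sin_sq_add_cos_sq c; linarith
  refine ⟨(rotIso (Real.cos c) (Real.sin c) s hco hs2).toIsometryEquiv, ?_, ?_⟩
  · show rotIso (Real.cos c) (Real.sin c) s hco hs2 (0 : Pt) = (0 : Pt)
    exact map_zero _
  · intro i
    show rotIso (Real.cos c) (Real.sin c) s hco hs2 _ = _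
    obtain ⟨k, hk⟩ := h i
    simp only [model]
    rw [rotIso_pt2, hk, Real.cos_add_int_mul_two_pi, Real.sin_add_int_mul_two_pi]
    rcases hs with h | h <;> subst h
    · rw [show (1 : ℝ) * θ i + c = θ i + c by ring, Real.cos_add, Real.sin_add]
      congr 1 <;> ring
    · rw [show (-1 : ℝ) * θ i + c = c - θ i by ring, Real.cos_sub, Real.sin_sub]
      congr 1 <;> ring
lemma exists_isometry_flat (S : Set Pt) (hS : Coplanar ℝ S) (v : Pt) (hv : v ∈ S) :
    ∃ σ : Pt ≃ᵢ Pt, σ v = 0 ∧ ∀ p ∈ S, (σ p) 2 = 0 ∧ ‖σ p‖ = ‖p - v‖ ∧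
      ∀ q ∈ S, ⟪σ p, σ q⟫ = ⟪p - v, q - v⟫ := by
  set V : Submodule ℝ Pt := vectorSpan ℝ S with hV
  have hrank : Module.finrank ℝ V ≤ 2 := hS.finrank_le_two
  set n := Module.finrank ℝ V with hn
  set B := stdOrthonormalBasis ℝ V with hB
  set u : Fin 3 → Pt := fun j => if h : (j : ℕ) < n then (B ⟨j, h⟩ : Pt) else 0 with hu
  set s : Set (Fin 3) := {j | (j : ℕ) < n} with hs
  have horth : Orthonormal ℝ (s.restrict u) := by
    rw [orthonormal_iff_ite]
    rintro ⟨i, hi⟩ ⟨j, hj⟩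
    have hi' : (i : ℕ) < n := hi
    have hj' : (j : ℕ) < n := hj
    simp only [Set.restrict_apply, hu, dif_pos hi', dif_pos hj']
    have h2 := (orthonormal_iff_ite.mp B.orthonormal) ⟨i, hi'⟩ ⟨j, hj'⟩
    rw [Submodule.coe_inner] at h2
    show ⟪(if h : (i : ℕ) < n then (B ⟨i, h⟩ : Pt) else 0),
      (if h : (j : ℕ) < n then (B ⟨j, h⟩ : Pt) else 0)⟫ = _
    rw [dif_pos hi', dif_pos hj']
    rw [h2]
    congr 1
    simp [Fin.ext_iff, Subtype.ext_iff]
  have hcard : Module.finrank ℝ Pt = Fintype.card (Fin 3) := by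
    simp [finrank_euclideanSpace_fin]
  obtain ⟨b, hb⟩ := horth.exists_orthonormalBasis_extension_of_card_eq hcard
  have key : ∀ x : V, ⟪b 2, (x : Pt)⟫ = 0 := by
    have hgen : ∀ i : Fin n, ⟪b 2, (B i : Pt)⟫ = 0 := by
      intro i
      have hi3 : (i : ℕ) < 3 := by omega
      set j : Fin 3 := ⟨i, hi3⟩ with hj
      have hjs : j ∈ s := by
        simp only [hs, Set.mem_setOf_eq, hj]; exact i.2
      have hbj : b j = (B i : Pt) := by
        rw [hb j hjs, hu]
        simp only [hj, dif_pos (show ((⟨(i : ℕ), hi3⟩ : Fin 3) : ℕ) < n from i.2)]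
        rfl
      have hne : (2 : Fin 3) ≠ j := by
        simp only [hj, Fin.ne_iff_vne]
        simp only [Fin.val_two]
        omega
      rw [← hbj]
      exact b.orthonormal.2 hne
    intro x
    have hx : (x : V) ∈ Submodule.span ℝ (Set.range B) := by
      rw [← B.coe_toBasis, B.toBasis.span_eq]; trivial
    induction hx using Submodule.span_induction with
    | mem y hy => obtain ⟨i, rfl⟩ := hy; exact hgen i
    | zero => simp
    | add y z _ _ hy hz => rw [Submodule.coe_add, inner_add_right, hy, hz]; ring
    | smul a y _ hy => rw [Submodule.coe_smul, inner_smul_right, hy]; ring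
  have happ0 : ((IsometryEquiv.subRight v).trans b.repr.toIsometryEquiv) v = b.repr (v - v) := rfl
  refine ⟨(IsometryEquiv.subRight v).trans b.repr.toIsometryEquiv, ?_, ?_⟩
  · rw [happ0]; simp
  · intro p hp
    have hmem : ∀ p ∈ S, p - v ∈ V := by
      intro p hp
      rw [hV]
      have := vsub_mem_vectorSpan ℝ hp hv
      rwa [vsub_eq_sub] at this
    have happ : ∀ x : Pt, ((IsometryEquiv.subRight v).trans b.repr.toIsometryEquiv) x
        = b.repr (x - v) := fun x => rfl
    refine ⟨?_, ?_, ?_⟩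
    · rw [happ]
      rw [show b.repr (p - v) 2 = ⟪b 2, p - v⟫ from b.repr_apply_apply (p - v) 2]
      exact key ⟨p - v, hmem p hp⟩
    · rw [happ]; exact b.repr.norm_map _
    · intro q hq
      rw [happ, happ]
      exact b.repr.inner_map_map _ _

lemma flat_to_model (d α : ZMod 4 → ℝ) (hd : ∀ i, 0 < d i)
    (hα : ∀ i, α i ∈ Set.Ioo 0 Real.pi) (t : PyrTuple) (ht : t ∈ pyrSet d α)
    (hflat : IsFlat t) :
    ∃ ψ : ZMod 4 → ℝ, (∀ i, Real.cos (ψ i - ψ (i + 1)) = Real.cos (α i)) ∧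
      PyrCongruent t (model d ψ) := by
  set S : Set Pt := {t.1, t.2 0, t.2 1, t.2 2, t.2 3} with hSdef
  have hvS : t.1 ∈ S := Set.mem_insert _ _
  have hwS : ∀ i : ZMod 4, t.2 i ∈ S := by
    intro i
    have h4 : ∀ j : ZMod 4, j = 0 ∨ j = 1 ∨ j = 2 ∨ j = 3 := by decide
    rcases h4 i with rfl | rfl | rfl | rfl <;> simp [hSdef]
  obtain ⟨σ, hσv, hσ⟩ := exists_isometry_flat S hflat t.1 hvS
  rw [mem_pyrSet_iff d α hd hα] at ht
  -- coordinates
  set q : ZMod 4 → Pt := fun i => σ (t.2 i) with hq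
  have hq2 : ∀ i, q i 2 = 0 := fun i => (hσ _ (hwS i)).1
  have hqnorm : ∀ i, ‖q i‖ = d i := by
    intro i; rw [hq]
    calc ‖σ (t.2 i)‖ = ‖t.2 i - t.1‖ := (hσ _ (hwS i)).2.1
      _ = d i := (ht i).1
  have hqinner : ∀ i, ⟪q i, q (i + 1)⟫ = d i * d (i + 1) * Real.cos (α i) := by
    intro i
    calc ⟪q i, q (i + 1)⟫ = ⟪t.2 i - t.1, t.2 (i + 1) - t.1⟫ :=
        (hσ _ (hwS i)).2.2 _ (hwS (i + 1))
      _ = d i * d (i + 1) * Real.cos (α i) := (ht i).2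
  -- complex polar form
  set z : ZMod 4 → ℂ := fun i => Complex.mk (q i 0) (q i 1) with hz
  have habs : ∀ i, ‖z i‖ = d i := by
    intro i
    have h1 : ‖q i‖ ^ 2 = q i 0 ^ 2 + q i 1 ^ 2 := by
      have h0 := real_inner_self_eq_norm_sq (q i)
      rw [PiLp.inner_apply] at h0
      simp only [RCLike.inner_apply, conj_trivial, Fin.sum_univ_three] at h0
      rw [hq2 i] at h0
      nlinarith
    have h2 : ‖z i‖ ^ 2 = q i 0 ^ 2 + q i 1 ^ 2 := by
      rw [Complex.sq_norm, Complex.normSq_mk]; ring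
    have h3 := norm_nonneg (z i)
    have h4 := (hd i).le
    rw [hqnorm i] at h1
    nlinarith
  have hzne : ∀ i, z i ≠ 0 := by
    intro i h
    have h0 := habs i
    rw [h, norm_zero] at h0
    exact (hd i).ne h0
  set ψ : ZMod 4 → ℝ := fun i => Complex.arg (z i) with hψ
  have hre : ∀ i, q i 0 = d i * Real.cos (ψ i) := by
    intro i
    have h1 := Complex.cos_arg (hzne i)
    rw [habs i] at h1
    have h2 : (z i).re = q i 0 := rfl
    show q i 0 = d i * Real.cos ((z i).arg)
    rw [h1, h2]
    field_simp [(hd i).ne']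
  have him : ∀ i, q i 1 = d i * Real.sin (ψ i) := by
    intro i
    have h1 := Complex.sin_arg (z i)
    rw [habs i] at h1
    have h2 : (z i).im = q i 1 := rfl
    show q i 1 = d i * Real.sin ((z i).arg)
    rw [h1, h2]
    field_simp [(hd i).ne']
  have hqpt : ∀ i, q i = pt2 (d i * Real.cos (ψ i)) (d i * Real.sin (ψ i)) := by
    intro i
    ext j
    fin_cases j
    · exact hre i
    · exact him i
    · exact hq2 i
  refine ⟨ψ, ?_, σ, hσv, ?_⟩
  · intro i
    have := hqinner i
    rw [hqpt i, hqpt (i + 1), inner_pt2] at this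
    have hcos : d i * d (i + 1) * Real.cos (ψ i - ψ (i + 1)) =
        d i * d (i + 1) * Real.cos (α i) := by
      rw [Real.cos_sub]; linarith [this]
    have hpos : 0 < d i * d (i + 1) := mul_pos (hd i) (hd (i + 1))
    exact mul_left_cancel₀ hpos.ne' hcos
  · intro i
    show q i = (model d ψ).2 i
    rw [hqpt i]; rfl


lemma helper_contra (a b : ℝ) (ha : a ∈ Set.Ioo 0 Real.pi) (hb : b ∈ Set.Ioo 0 Real.pi)
    (hnot : Real.cos a ^ 2 ≠ Real.cos b ^ 2) (e : ℝ) (he : e = 2 ∨ e = 0 ∨ e = -2)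
    (n : ℤ) (h : 2 * a + e * b = n * (2 * Real.pi)) : False := by
  have hπ := Real.pi_pos
  obtain ⟨ha1, ha2⟩ := ha
  obtain ⟨hb1, hb2⟩ := hb
  have hn1 : n < 2 := by
    by_contra hc
    push_neg at hc
    have : (2 : ℝ) ≤ (n : ℝ) := by exact_mod_cast hc
    rcases he with rfl | rfl | rfl <;> nlinarith
  have hn2 : -2 < n := by
    by_contra hc
    push_neg at hc
    have : (n : ℝ) ≤ (-2 : ℝ) := by exact_mod_cast hc
    rcases he with rfl | rfl | rfl <;> nlinarith
  have hcases : n = -1 ∨ n = 0 ∨ n = 1 := by omega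
  rcases he with rfl | rfl | rfl <;> rcases hcases with rfl | rfl | rfl <;> push_cast at h
  · linarith
  · linarith
  · exact hnot (by rw [show a = Real.pi - b by linarith, Real.cos_pi_sub]; ring)
  · linarith
  · linarith
  · linarith
  · linarith
  · exact hnot (by rw [show a = b by linarith])
  · linarith

lemma cos_eq_cos_exists (x y : ℝ) (h : Real.cos x = Real.cos y) :
    ∃ (e : ℝ) (k : ℤ), (e = 1 ∨ e = -1) ∧ x = e * y + (k : ℝ) * (2 * Real.pi) := by
  have h' : ((x : Real.Angle)) = (y : Real.Angle) ∨ (x : Real.Angle) = -(y : Real.Angle) := by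
    apply Real.Angle.cos_eq_iff_eq_or_eq_neg.mp
    rwa [Real.Angle.cos_coe, Real.Angle.cos_coe]
  rcases h' with h' | h'
  · obtain ⟨k, hk⟩ := Real.Angle.angle_eq_iff_two_pi_dvd_sub.mp h'
    exact ⟨1, k, Or.inl rfl, by linarith [hk]⟩
  · rw [← Real.Angle.coe_neg] at h'
    obtain ⟨k, hk⟩ := Real.Angle.angle_eq_iff_two_pi_dvd_sub.mp h'
    exact ⟨-1, k, Or.inr rfl, by linarith [hk]⟩

/-- model angles -/
def θmod (α : ZMod 4 → ℝ) (δ ε : ℝ) : ZMod 4 → ℝ := fun i =>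
  if i = 0 then 0 else if i = 1 then α 0 else if i = 2 then α 0 + ε * α 1
  else α 0 + ε * α 1 + δ * α 2

lemma θmod_zero (α : ZMod 4 → ℝ) (δ ε : ℝ) : θmod α δ ε 0 = 0 := by simp [θmod]
lemma θmod_one (α : ZMod 4 → ℝ) (δ ε : ℝ) : θmod α δ ε 1 = α 0 := by
  simp [θmod, show (1 : ZMod 4) ≠ 0 by decide]
lemma θmod_two (α : ZMod 4 → ℝ) (δ ε : ℝ) : θmod α δ ε 2 = α 0 + ε * α 1 := by
  simp [θmod, show (2 : ZMod 4) ≠ 0 by decide, show (2 : ZMod 4) ≠ 1 by decide]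
lemma θmod_three (α : ZMod 4 → ℝ) (δ ε : ℝ) :
    θmod α δ ε 3 = α 0 + ε * α 1 + δ * α 2 := by
  simp [θmod, show (3 : ZMod 4) ≠ 0 by decide, show (3 : ZMod 4) ≠ 1 by decide,
    show (3 : ZMod 4) ≠ 2 by decide]

lemma θmod_cos (α : ZMod 4 → ℝ) (δ ε : ℝ)
    (hcase : (δ = -1 ∧ α 2 = α 0 ∧ α 3 = α 1) ∨
      (δ = 1 ∧ α 0 + α 2 = Real.pi ∧ α 1 + α 3 = Real.pi))
    (hε : ε = 1 ∨ ε = -1) :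
    ∀ i, Real.cos (θmod α δ ε i - θmod α δ ε (i + 1)) = Real.cos (α i) := by
  intro i
  have h4 : ∀ j : ZMod 4, j = 0 ∨ j = 1 ∨ j = 2 ∨ j = 3 := by decide
  rcases h4 i with rfl | rfl | rfl | rfl
  · rw [show (0 : ZMod 4) + 1 = 1 by decide, θmod_zero, θmod_one, zero_sub, Real.cos_neg]
  · rw [show (1 : ZMod 4) + 1 = 2 by decide, θmod_one, θmod_two,
      show α 0 - (α 0 + ε * α 1) = -(ε * α 1) by ring, Real.cos_neg]
    rcases hε with rfl | rfl
    · rw [one_mul]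
    · rw [show (-1 : ℝ) * α 1 = -(α 1) by ring, Real.cos_neg]
  · rw [show (2 : ZMod 4) + 1 = 3 by decide, θmod_two, θmod_three,
      show α 0 + ε * α 1 - (α 0 + ε * α 1 + δ * α 2) = -(δ * α 2) by ring, Real.cos_neg]
    rcases hcase with ⟨rfl, _, _⟩ | ⟨rfl, _, _⟩
    · rw [show (-1 : ℝ) * α 2 = -(α 2) by ring, Real.cos_neg]
    · rw [one_mul]
  · rw [show (3 : ZMod 4) + 1 = 0 by decide, θmod_three, θmod_zero, sub_zero]
    rcases hcase with ⟨rfl, h2, h3⟩ | ⟨rfl, h2, h3⟩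
    · rw [h2, h3, show α 0 + ε * α 1 + -1 * α 0 = ε * α 1 by ring]
      rcases hε with rfl | rfl
      · rw [one_mul]
      · rw [show (-1 : ℝ) * α 1 = -(α 1) by ring, Real.cos_neg]
    · rw [show α 3 = Real.pi - α 1 by linarith, Real.cos_pi_sub,
        show α 0 + ε * α 1 + 1 * α 2 = ε * α 1 + Real.pi by linarith]
      rcases hε with rfl | rfl
      · rw [one_mul, Real.cos_add_pi]
      · rw [show (-1 : ℝ) * α 1 + Real.pi = -(α 1) + Real.pi by ring, Real.cos_add_pi,
          Real.cos_neg]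

lemma angle_chase (α : ZMod 4 → ℝ) (hα : ∀ i, α i ∈ Set.Ioo 0 Real.pi) (δ : ℝ)
    (hcase : (δ = -1 ∧ α 2 = α 0 ∧ α 3 = α 1) ∨
      (δ = 1 ∧ α 0 + α 2 = Real.pi ∧ α 1 + α 3 = Real.pi))
    (hnot : Real.cos (α 0) ^ 2 ≠ Real.cos (α 1) ^ 2)
    (ψ : ZMod 4 → ℝ) (h : ∀ i, Real.cos (ψ i - ψ (i + 1)) = Real.cos (α i)) :
    ∃ ε s c, (ε = 1 ∨ ε = -1) ∧ (s = 1 ∨ s = -1) ∧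
      ∀ i, ∃ k : ℤ, ψ i = s * θmod α δ ε i + c + (k : ℝ) * (2 * Real.pi) := by
  have h0 := h 0; rw [show (0 : ZMod 4) + 1 = 1 by decide] at h0
  have h1 := h 1; rw [show (1 : ZMod 4) + 1 = 2 by decide] at h1
  have h2 := h 2; rw [show (2 : ZMod 4) + 1 = 3 by decide] at h2
  have h3 := h 3; rw [show (3 : ZMod 4) + 1 = 0 by decide] at h3
  obtain ⟨e0, k0, he0, hd0⟩ := cos_eq_cos_exists _ _ h0
  obtain ⟨e1, k1, he1, hd1⟩ := cos_eq_cos_exists _ _ h1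
  obtain ⟨e2, k2, he2, hd2⟩ := cos_eq_cos_exists _ _ h2
  obtain ⟨e3, k3, he3, hd3⟩ := cos_eq_cos_exists _ _ h3
  have he0sq : e0 ^ 2 = 1 := by rcases he0 with rfl | rfl <;> norm_num
  have hsum : e0 * α 0 + e1 * α 1 + e2 * α 2 + e3 * α 3
      + ((k0 + k1 + k2 + k3 : ℤ) : ℝ) * (2 * Real.pi) = 0 := by
    push_cast
    linarith [hd0, hd1, hd2, hd3]
  -- key claim
  have hε2 : e2 = e0 * δ := by
    by_contra hne
    have he2' : e2 = -(e0 * δ) := by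
      rcases hcase with ⟨rfl, -, -⟩ | ⟨rfl, -, -⟩ <;>
        rcases he0 with rfl | rfl <;> rcases he2 with rfl | rfl <;>
          (norm_num at hne) <;> norm_num
    rcases hcase with ⟨hδ, h2a, h3a⟩ | ⟨hδ, h2a, h3a⟩
    · -- equal case : δ = -1, so e2 = e0
      subst hδ
      rw [show -(e0 * (-1 : ℝ)) = e0 by ring] at he2'
      rw [h2a, h3a, he2'] at hsum
      rcases he0 with rfl | rfl
      · exact helper_contra (α 0) (α 1) (hα 0) (hα 1) hnot (e1 + e3)
          (by rcases he1 with rfl | rfl <;> rcases he3 with rfl | rfl <;> norm_num)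
          (-(k0 + k1 + k2 + k3)) (by push_cast at hsum ⊢; linarith)
      · exact helper_contra (α 0) (α 1) (hα 0) (hα 1) hnot (-(e1 + e3))
          (by rcases he1 with rfl | rfl <;> rcases he3 with rfl | rfl <;> norm_num)
          (k0 + k1 + k2 + k3) (by push_cast at hsum ⊢; linarith)
    · -- supplementary case : δ = 1, so assumed e2 = -e0
      subst hδ
      rw [show -(e0 * (1 : ℝ)) = -e0 by ring] at he2'
      rw [show α 2 = Real.pi - α 0 by linarith, show α 3 = Real.pi - α 1 by linarith,
        he2'] at hsum
      rcases he0 with rfl | rfl <;> rcases he1 with rfl | rfl <;> rcases he3 with rfl | rfl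
      · exact helper_contra (α 0) (α 1) (hα 0) (hα 1) hnot 0 (by norm_num)
          (-(k0 + k1 + k2 + k3)) (by push_cast at hsum ⊢; linarith)
      · exact helper_contra (α 0) (α 1) (hα 0) (hα 1) hnot 2 (by norm_num)
          (1 - (k0 + k1 + k2 + k3)) (by push_cast at hsum ⊢; linarith)
      · exact helper_contra (α 0) (α 1) (hα 0) (hα 1) hnot (-2) (by norm_num)
          (-(k0 + k1 + k2 + k3)) (by push_cast at hsum ⊢; linarith)
      · exact helper_contra (α 0) (α 1) (hα 0) (hα 1) hnot 0 (by norm_num)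
          (1 - (k0 + k1 + k2 + k3)) (by push_cast at hsum ⊢; linarith)
      · exact helper_contra (α 0) (α 1) (hα 0) (hα 1) hnot 0 (by norm_num)
          ((k0 + k1 + k2 + k3) + 1) (by push_cast at hsum ⊢; linarith)
      · exact helper_contra (α 0) (α 1) (hα 0) (hα 1) hnot (-2) (by norm_num)
          ((k0 + k1 + k2 + k3)) (by push_cast at hsum ⊢; linarith)
      · exact helper_contra (α 0) (α 1) (hα 0) (hα 1) hnot 2 (by norm_num)
          ((k0 + k1 + k2 + k3) + 1) (by push_cast at hsum ⊢; linarith)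
      · exact helper_contra (α 0) (α 1) (hα 0) (hα 1) hnot 0 (by norm_num)
          ((k0 + k1 + k2 + k3)) (by push_cast at hsum ⊢; linarith)
  refine ⟨e0 * e1, -e0, ψ 0, ?_, ?_, ?_⟩
  · rcases he0 with rfl | rfl <;> rcases he1 with rfl | rfl <;> norm_num
  · rcases he0 with rfl | rfl <;> norm_num
  · intro i
    have h4 : ∀ j : ZMod 4, j = 0 ∨ j = 1 ∨ j = 2 ∨ j = 3 := by decide
    rcases h4 i with rfl | rfl | rfl | rfl
    · exact ⟨0, by rw [θmod_zero]; push_cast; ring⟩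
    · exact ⟨-k0, by rw [θmod_one]; push_cast; linarith [hd0]⟩
    · refine ⟨-(k0 + k1), ?_⟩
      rw [θmod_two]
      push_cast
      linear_combination (-1 : ℝ) * hd0 - hd1 + e1 * α 1 * he0sq
    · refine ⟨-(k0 + k1 + k2), ?_⟩
      rw [θmod_three]
      push_cast
      linear_combination (-1 : ℝ) * hd0 - hd1 - hd2 + e1 * α 1 * he0sq - α 2 * hε2

lemma dist_pt2_sq (x y x' y' : ℝ) :
    dist (pt2 x y) (pt2 x' y') ^ 2 = (x - x') ^ 2 + (y - y') ^ 2 := by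
  rw [dist_eq_norm, pt2_sub, norm_pt2]

lemma models_not_congruent (d α : ZMod 4 → ℝ) (hd : ∀ i, 0 < d i)
    (hα : ∀ i, α i ∈ Set.Ioo 0 Real.pi) (δ : ℝ) :
    ¬ PyrCongruent (model d (θmod α δ 1)) (model d (θmod α δ (-1))) := by
  rintro ⟨σ, -, h2⟩
  have hdist : dist ((model d (θmod α δ 1)).2 0) ((model d (θmod α δ 1)).2 2)
      = dist ((model d (θmod α δ (-1))).2 0) ((model d (θmod α δ (-1))).2 2) := by
    rw [← h2 0, ← h2 2]
    exact (σ.isometry.dist_eq _ _).symm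
  have happ : ∀ (ψ : ZMod 4 → ℝ) (i : ZMod 4),
      (model d ψ).2 i = pt2 (d i * Real.cos (ψ i)) (d i * Real.sin (ψ i)) := fun _ _ => rfl
  have key : ∀ ε : ℝ, dist ((model d (θmod α δ ε)).2 0) ((model d (θmod α δ ε)).2 2) ^ 2
      = d 0 ^ 2 + d 2 ^ 2 - 2 * d 0 * d 2 * Real.cos (α 0 + ε * α 1) := by
    intro ε
    rw [happ, happ, dist_pt2_sq, θmod_zero, θmod_two]
    have hs := Real.sin_sq_add_cos_sq (α 0 + ε * α 1)
    rw [Real.cos_zero, Real.sin_zero]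
    linear_combination (d 2 ^ 2) * hs
  have hsq : dist ((model d (θmod α δ 1)).2 0) ((model d (θmod α δ 1)).2 2) ^ 2
      = dist ((model d (θmod α δ (-1))).2 0) ((model d (θmod α δ (-1))).2 2) ^ 2 := by
    rw [hdist]
  rw [key 1, key (-1)] at hsq
  have hc : Real.cos (α 0 + 1 * α 1) = Real.cos (α 0 + (-1) * α 1) := by
    have h20 := hd 0
    have h22 := hd 2
    have hpos : 0 < 2 * d 0 * d 2 := by positivity
    nlinarith [hsq]
  rw [one_mul] at hc
  rw [show α 0 + (-1) * α 1 = α 0 - α 1 by ring] at hc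
  rw [Real.cos_add, Real.cos_sub] at hc
  nlinarith [Real.sin_pos_of_pos_of_lt_pi (hα 0).1 (hα 0).2,
    Real.sin_pos_of_pos_of_lt_pi (hα 1).1 (hα 1).2]

/-- Flat realizations of a rhomboid: for fixed positive distances `d i` and apex angles
`α i ∈ (0, π)` satisfying the rhomboid condition (`(α₁, α₃)` and `(α₂, α₄)` each equal
or supplementary) and `cos² α₁ ≠ cos² α₂`, the set of flat pyramid tuples is nonempty
and is partitioned by congruence into exactly two classes. -/
theorem rhomboid_flat_realizations
    (d α : ZMod 4 → ℝ)
    (hd : ∀ i, 0 < d i)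
    (hα : ∀ i, α i ∈ Set.Ioo 0 Real.pi)
    (hrhomboid : (α 0 = α 2 ∧ α 1 = α 3) ∨ (α 0 + α 2 = Real.pi ∧ α 1 + α 3 = Real.pi))
    (hnot : Real.cos (α 0) ^ 2 ≠ Real.cos (α 1) ^ 2) :
    (∃ t ∈ pyrSet d α, IsFlat t) ∧
    (∃ t₁ t₂, t₁ ∈ pyrSet d α ∧ IsFlat t₁ ∧ t₂ ∈ pyrSet d α ∧ IsFlat t₂ ∧
      ¬ PyrCongruent t₁ t₂ ∧
      ∀ t ∈ pyrSet d α, IsFlat t → (PyrCongruent t t₁ ∨ PyrCongruent t t₂)) := by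
  obtain ⟨δ, hcase⟩ : ∃ δ : ℝ, (δ = -1 ∧ α 2 = α 0 ∧ α 3 = α 1) ∨
      (δ = 1 ∧ α 0 + α 2 = Real.pi ∧ α 1 + α 3 = Real.pi) := by
    rcases hrhomboid with ⟨h1, h2⟩ | ⟨h1, h2⟩
    · exact ⟨-1, Or.inl ⟨rfl, h1.symm, h2.symm⟩⟩
    · exact ⟨1, Or.inr ⟨rfl, h1, h2⟩⟩
  have hT1 : model d (θmod α δ 1) ∈ pyrSet d α :=
    model_mem d α hd hα _ (θmod_cos α δ 1 hcase (Or.inl rfl))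
  have hT2 : model d (θmod α δ (-1)) ∈ pyrSet d α :=
    model_mem d α hd hα _ (θmod_cos α δ (-1) hcase (Or.inr rfl))
  refine ⟨⟨model d (θmod α δ 1), hT1, model_flat _ _⟩,
    model d (θmod α δ 1), model d (θmod α δ (-1)), hT1, model_flat _ _, hT2,
    model_flat _ _, models_not_congruent d α hd hα δ, ?_⟩
  intro t ht hflat
  obtain ⟨ψ, hψcos, hcong⟩ := flat_to_model d α hd hα t ht hflat
  obtain ⟨ε, s, c, hεd, hsd, hk⟩ := angle_chase α hα δ hcase hnot ψ hψcos
  have hcong2 : PyrCongruent (model d (θmod α δ ε)) (model d ψ) :=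
    rot_congr d ψ (θmod α δ ε) s c hsd hk
  rcases hεd with rfl | rfl
  · exact Or.inl (pyrCongruent_trans hcong (pyrCongruent_symm hcong2))
  · exact Or.inr (pyrCongruent_trans hcong (pyrCongruent_symm hcong2))
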